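/- arXiv:math/0703891 — 2 statements merged into one kernel-verified Lean document; each statement's English description precedes it below -/
import Mathlib

section
/- Let F and X be locally finite simple graphs, let φ be an Aut(F)-voltage assignment on X, and let p : Y → X be a graph covering. Define ψ on the directed edges of Y by ψ(xy) = φ(p(x)p(y)); then ψ is an Aut(F)-voltage assignment on Y, and the map p̃ : Y ×^ψ F → X ×^φ F given by p̃(x, i) = (p(x), i) is a graph covering (it preserves adjacency and restricts to a bijection from the neighborhood of each vertex (x,i) onto the neighborhood of (p(x), i)). -/
/-- `p : V → V'` is a graph covering from `G` to `H`: it preserves adjacency and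
restricts to a bijection from the neighborhood of each vertex `x` onto the
neighborhood of `p x`. -/
def IsGraphCovering {V V' : Type*} (G : SimpleGraph V) (H : SimpleGraph V')
    (p : V → V') : Prop :=
  (∀ ⦃x y⦄, G.Adj x y → H.Adj (p x) (p y)) ∧
    ∀ x, Set.BijOn p (G.neighborSet x) (H.neighborSet (p x))

/-- The graph bundle `G ×^φ F` determined by a voltage assignment
`φ : V → V → Equiv.Perm W` satisfying `φ v u = (φ u v)⁻¹` on adjacent pairs:
`(u, i)` is adjacent to `(v, j)` iff either `u ~ v` and `j = φ u v i`, or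
`u = v` and `i ~ j`. -/
def GraphBundle {V W : Type*} (G : SimpleGraph V) (F : SimpleGraph W)
    (φ : V → V → Equiv.Perm W)
    (hφ : ∀ ⦃u v⦄, G.Adj u v → φ v u = (φ u v)⁻¹) : SimpleGraph (V × W) where
  Adj p q := (G.Adj p.1 q.1 ∧ q.2 = φ p.1 q.1 p.2) ∨ (p.1 = q.1 ∧ F.Adj p.2 q.2)
  symm := by
    constructor
    rintro ⟨u, i⟩ ⟨v, j⟩ (⟨h, hj⟩ | ⟨h, hF⟩)
    · exact Or.inl ⟨h.symm, by simp only at hj ⊢; simp [hj, hφ h]⟩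
    · exact Or.inr ⟨h.symm, hF.symm⟩
  loopless := by
    constructor
    rintro ⟨u, i⟩ (⟨h, _⟩ | ⟨_, h⟩)
    · exact G.loopless.irrefl u h
    · exact F.loopless.irrefl i h

/-- if `φ` is an `Aut(F)`-voltage assignment on `X` and `p : Y → X`
is a graph covering, then `ψ (x, y) = φ (p x, p y)` is an `Aut(F)`-voltage
assignment on `Y`, and `p̃ (x, i) = (p x, i)` is a graph covering
`Y ×^ψ F → X ×^φ F`. -/
theorem bundle_covering_of_covering {VX VY W : Type*}
    (X : SimpleGraph VX) (Y : SimpleGraph VY) (F : SimpleGraph W)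
    (hXlf : X.LocallyFinite) (hYlf : Y.LocallyFinite) (hFlf : F.LocallyFinite)
    (φ : VX → VX → Equiv.Perm W)
    (hφaut : ∀ ⦃u v⦄, X.Adj u v → ∀ i j, F.Adj i j ↔ F.Adj (φ u v i) (φ u v j))
    (hφ : ∀ ⦃u v⦄, X.Adj u v → φ v u = (φ u v)⁻¹)
    (p : VY → VX) (hp : IsGraphCovering Y X p) :
    (∀ ⦃x y⦄, Y.Adj x y →
        (fun x y : VY => φ (p x) (p y)) y x = ((fun x y : VY => φ (p x) (p y)) x y)⁻¹) ∧
      (∀ ⦃x y⦄, Y.Adj x y → ∀ i j, F.Adj i j ↔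
        F.Adj ((fun x y : VY => φ (p x) (p y)) x y i) ((fun x y : VY => φ (p x) (p y)) x y j)) ∧
      IsGraphCovering
        (GraphBundle Y F (fun x y => φ (p x) (p y)) (fun _ _ hxy => hφ (hp.1 hxy)))
        (GraphBundle X F φ hφ)
        (fun q => (p q.1, q.2)) := by
  refine ⟨fun x y hxy => hφ (hp.1 hxy), fun x y hxy i j => hφaut (hp.1 hxy) i j, ?_, ?_⟩
  · rintro ⟨x, i⟩ ⟨y, j⟩ (⟨h, hj⟩ | ⟨h, hF⟩)
    · exact Or.inl ⟨hp.1 h, hj⟩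
    · exact Or.inr ⟨congrArg p h, hF⟩
  · rintro ⟨x, i⟩
    refine ⟨?_, ?_, ?_⟩
    · rintro ⟨y, j⟩ (⟨h, hj⟩ | ⟨h, hF⟩)
      · exact Or.inl ⟨hp.1 h, hj⟩
      · exact Or.inr ⟨congrArg p h, hF⟩
    · rintro ⟨y1, j1⟩ hm1 ⟨y2, j2⟩ hm2 heq
      have hj : j1 = j2 := congrArg Prod.snd heq
      have hpy : p y1 = p y2 := congrArg Prod.fst heq
      subst hj
      rcases hm1 with (⟨h1, hj1⟩ | ⟨h1, _⟩) <;> rcases hm2 with (⟨h2, hj2⟩ | ⟨h2, _⟩)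
      · exact Prod.ext ((hp.2 x).2.1 h1 h2 hpy) rfl
      · exact absurd (hpy.trans (congrArg p h2.symm)) (hp.1 h1).ne'
      · exact absurd ((congrArg p h1).trans hpy) (hp.1 h2).ne
      · exact Prod.ext (h1.symm.trans h2) rfl
    · rintro ⟨v, j⟩ (⟨h, hj⟩ | ⟨h, hF⟩)
      · obtain ⟨y, hy, hpy⟩ := (hp.2 x).2.2 h
        exact ⟨(y, j), Or.inl ⟨hy, show j = φ (p x) (p y) i by rw [hpy]; exact hj⟩, show ((p y, j) : VX × W) = (v, j) by rw [hpy]⟩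
      · exact ⟨(x, j), Or.inr ⟨rfl, hF⟩, Prod.ext h rfl⟩
end

section
/- Let G be a locally finite simple graph, F a finite simple graph, and φ an Aut(F)-voltage assignment on G. Then for all vertices u, v of G and i, j of F, the (0,1)-valued adjacency entry of the bundle satisfies A_{G ×^φ F}((u,i),(v,j)) = Σ_{γ ∈ Aut(F)} A_{G⃗_{(φ,γ)}}(u,v) · P_γ(i,j) + δ_{u,v} · A_F(i,j), where δ_{u,v} = 1 iff u = v. (In operator form: the adjacency operator of the bundle decomposes as ⊕_{γ ∈ Aut(F)} A_{G⃗_{(φ,γ)}} ⊗ P_γ + I_G ⊗ A_F.) -/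
instance {V W : Type*} [DecidableEq V] [DecidableEq W]
    (G : SimpleGraph V) (F : SimpleGraph W) [DecidableRel G.Adj] [DecidableRel F.Adj]
    (φ : V → V → Equiv.Perm W)
    (hφ : ∀ ⦃u v⦄, G.Adj u v → φ v u = (φ u v)⁻¹) :
    DecidableRel (GraphBundle G F φ hφ).Adj := fun p q =>
  decidable_of_iff ((G.Adj p.1 q.1 ∧ q.2 = φ p.1 q.1 p.2) ∨ (p.1 = q.1 ∧ F.Adj p.2 q.2)) Iff.rfl

/-- the `(0,1)`-adjacency entry of the bundle `G ×^φ F` decomposes as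
`A_{G ×^φ F}((u,i),(v,j)) = Σ_{γ ∈ Aut(F)} A_{G⃗_{(φ,γ)}}(u,v) ⬝ P_γ(i,j) + δ_{u,v} ⬝ A_F(i,j)`,
where `A_{G⃗_{(φ,γ)}}(u,v) = 1` iff `u ~ v` and `φ u v = γ`, and `P_γ(i,j) = 1`
iff `j = γ i`. -/
theorem graphBundle_adjacency_entry {V W : Type*} [Fintype W] [DecidableEq W]
    (G : SimpleGraph V) (F : SimpleGraph W)
    [DecidableRel G.Adj] [DecidableRel F.Adj] [DecidableEq V]
    (hGlf : G.LocallyFinite)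
    (φ : V → V → Equiv.Perm W)
    (hφaut : ∀ ⦃u v⦄, G.Adj u v → ∀ i j, F.Adj i j ↔ F.Adj (φ u v i) (φ u v j))
    (hφ : ∀ ⦃u v⦄, G.Adj u v → φ v u = (φ u v)⁻¹)
    (u v : V) (i j : W) :
    (if (GraphBundle G F φ hφ).Adj (u, i) (v, j) then (1 : ℤ) else 0) =
      (∑ γ ∈ Finset.univ.filter
          (fun γ : Equiv.Perm W => ∀ i' j', F.Adj i' j' ↔ F.Adj (γ i') (γ j')),
        (if G.Adj u v ∧ φ u v = γ then (1 : ℤ) else 0) *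
          (if j = γ i then (1 : ℤ) else 0)) +
        (if u = v then (1 : ℤ) else 0) * (if F.Adj i j then (1 : ℤ) else 0) := by
  classical
  have hsum : (∑ γ ∈ Finset.univ.filter
      (fun γ : Equiv.Perm W => ∀ i' j', F.Adj i' j' ↔ F.Adj (γ i') (γ j')),
      (if G.Adj u v ∧ φ u v = γ then (1 : ℤ) else 0) *
        (if j = γ i then (1 : ℤ) else 0)) =
      if G.Adj u v ∧ j = φ u v i then 1 else 0 := by
    by_cases h : G.Adj u v
    · rw [Finset.sum_eq_single (φ u v)]
      · simp [h]
      · intro γ _ hγ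
        simp [Ne.symm hγ]
      · intro hmem
        exact absurd (Finset.mem_filter.mpr ⟨Finset.mem_univ _, hφaut h⟩) hmem
    · simp [h]
  rw [hsum]
  by_cases h : G.Adj u v
  · have hne : u ≠ v := G.ne_of_adj h
    simp [GraphBundle, h, hne]
  · by_cases huv : u = v
    · subst huv
      simp [GraphBundle, h]
    · simp [GraphBundle, h, huv]
end
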